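/- arXiv:2001.00683 — 3 statements merged into one kernel-verified Lean document; each statement's English description precedes it below -/
import Mathlib

section
/- If A is an n×n complex matrix with numerical range contained in the sector S_α for α ∈ [0, π/2), then (Re A)⁻¹ ≤ sec²(α) · Re(A⁻¹) in the Loewner order. -/
open Matrix
open scoped ComplexOrder

noncomputable section
namespace Paper

variable {n : ℕ}

/-- Real part `(A + Aᴴ)/2`. -/
def re (A : Matrix (Fin n) (Fin n) ℂ) : Matrix (Fin n) (Fin n) ℂ := (2⁻¹ : ℂ) • (A + Aᴴ)

/-- Imaginary part `(A - Aᴴ)/(2i)`. -/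
def im (A : Matrix (Fin n) (Fin n) ℂ) : Matrix (Fin n) (Fin n) ℂ :=
  (2 * Complex.I)⁻¹ • (A - Aᴴ)

/-- The sector `S_α`. -/
def sector (α : ℝ) : Set ℂ := {z | 0 < z.re ∧ |z.im| ≤ z.re * Real.tan α}

/-- Numerical range of a matrix. -/
def numericalRange (A : Matrix (Fin n) (Fin n) ℂ) : Set ℂ :=
  {z | ∃ x : Fin n → ℂ, star x ⬝ᵥ x = 1 ∧ z = star x ⬝ᵥ (A *ᵥ x)}

/-- Loewner order: `X ≤ Y` iff `Y - X` is positive semidefinite. -/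
def loewnerLE (X Y : Matrix (Fin n) (Fin n) ℂ) : Prop := (Y - X).PosSemidef

lemma re_isHermitian (A : Matrix (Fin n) (Fin n) ℂ) : (re A).IsHermitian := by
  show ((2⁻¹ : ℂ) • (A + Aᴴ))ᴴ = (2⁻¹ : ℂ) • (A + Aᴴ)
  rw [Matrix.conjTranspose_smul, Matrix.conjTranspose_add,
    Matrix.conjTranspose_conjTranspose, add_comm Aᴴ A]
  simp

/-- The `j`-th largest element of `v` (descending sort). -/
def nthLargest (v : Fin n → ℝ) (j : Fin n) : ℝ :=
  ((List.ofFn v).mergeSort (fun a b => decide (b ≤ a))).get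
    (Fin.cast (by simp) j)

/-- `j`-th largest eigenvalue of a Hermitian matrix. -/
def eigDesc {A : Matrix (Fin n) (Fin n) ℂ} (hA : A.IsHermitian) (j : Fin n) : ℝ :=
  nthLargest hA.eigenvalues j

/-- `j`-th largest singular value. -/
def singular (A : Matrix (Fin n) (Fin n) ℂ) (j : Fin n) : ℝ :=
  nthLargest (fun i => Real.sqrt ((Matrix.isHermitian_conjTranspose_mul_self A).eigenvalues i)) j

/-- The old Mathlib `Matrix.PosSemidef.sqrt` (removed since), spelled out with its old value. -/
def posSemidefSqrt {A : Matrix (Fin n) (Fin n) ℂ} (hA : A.PosSemidef) : Matrix (Fin n) (Fin n) ℂ :=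
  hA.1.eigenvectorUnitary.1 * diagonal ((↑) ∘ (√·) ∘ hA.1.eigenvalues) *
  (star hA.1.eigenvectorUnitary : Matrix (Fin n) (Fin n) ℂ)

/-- Weighted geometric mean of positive definite matrices. -/
def sharp (v : ℝ) {A B : Matrix (Fin n) (Fin n) ℂ} (hA : A.PosDef) (hB : B.PosDef) :
    Matrix (Fin n) (Fin n) ℂ :=
  posSemidefSqrt hA.posSemidef *
    (Matrix.isHermitian_mul_mul_conjTranspose (posSemidefSqrt hA.posSemidef)⁻¹ hB.1).cfc
      (fun x => Real.rpow x v) * posSemidefSqrt hA.posSemidef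

/-- Weighted arithmetic mean. -/
def arith (v : ℝ) (A B : Matrix (Fin n) (Fin n) ℂ) : Matrix (Fin n) (Fin n) ℂ :=
  (1 - v) • A + v • B

/-- Weighted harmonic mean. -/
def harm (v : ℝ) (A B : Matrix (Fin n) (Fin n) ℂ) : Matrix (Fin n) (Fin n) ℂ :=
  ((1 - v) • A⁻¹ + v • B⁻¹)⁻¹

/-- Kantorovich constant. -/
def K (h : ℝ) : ℝ := (h + 1) ^ 2 / (4 * h)


section AuxiliaryLemmas

private lemma conj_form (M : Matrix (Fin n) (Fin n) ℂ) (u v : Fin n → ℂ) :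
    star (star u ⬝ᵥ (M *ᵥ v)) = star v ⬝ᵥ (Mᴴ *ᵥ u) := by
  rw [star_dotProduct, star_star, star_mulVec, ← dotProduct_mulVec]

private lemma herm_selfadj {M : Matrix (Fin n) (Fin n) ℂ} (hM : M.IsHermitian) (x : Fin n → ℂ) :
    star (star x ⬝ᵥ (M *ᵥ x)) = star x ⬝ᵥ (M *ᵥ x) := by
  rw [conj_form, hM.eq]

private lemma herm_re {M : Matrix (Fin n) (Fin n) ℂ} (hM : M.IsHermitian) (x : Fin n → ℂ) :
    star x ⬝ᵥ (M *ᵥ x) = ((star x ⬝ᵥ (M *ᵥ x)).re : ℂ) := by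
  have h := herm_selfadj hM x
  rw [Complex.star_def] at h
  exact (Complex.conj_eq_iff_re.mp h).symm

private lemma dot_smul_self (c : ℂ) (x : Fin n → ℂ) :
    star (c • x) ⬝ᵥ (c • x) = (star c * c) * (star x ⬝ᵥ x) := by
  rw [star_smul, smul_dotProduct, dotProduct_smul, smul_eq_mul, smul_eq_mul]; ring

private lemma quad_smul (M : Matrix (Fin n) (Fin n) ℂ) (c : ℂ) (x : Fin n → ℂ) :
    star (c • x) ⬝ᵥ (M *ᵥ (c • x)) = (star c * c) * (star x ⬝ᵥ (M *ᵥ x)) := by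
  rw [star_smul, Matrix.mulVec_smul, smul_dotProduct, dotProduct_smul, smul_eq_mul, smul_eq_mul]
  ring

lemma im_isHermitian (A : Matrix (Fin n) (Fin n) ℂ) : (im A).IsHermitian := by
  have hs : star ((2 * Complex.I)⁻¹ : ℂ) = -(2 * Complex.I)⁻¹ := by
    simp [Complex.ext_iff]
  show ((2 * Complex.I)⁻¹ • (A - Aᴴ))ᴴ = (2 * Complex.I)⁻¹ • (A - Aᴴ)
  rw [Matrix.conjTranspose_smul, Matrix.conjTranspose_sub, Matrix.conjTranspose_conjTranspose,
    hs, neg_smul, ← smul_neg, neg_sub]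

lemma re_add_I_im (A : Matrix (Fin n) (Fin n) ℂ) : re A + Complex.I • im A = A := by
  unfold re im
  rw [smul_smul]
  have h : Complex.I * (2 * Complex.I)⁻¹ = 2⁻¹ := by
    field_simp
  rw [h]
  module

private lemma quad_decomp {α : ℝ} {A : Matrix (Fin n) (Fin n) ℂ}
    (hA : numericalRange A ⊆ sector α) {x : Fin n → ℂ} (hx : x ≠ 0) :
    ∃ a b : ℝ, 0 < a ∧ |b| ≤ a * Real.tan α ∧
      star x ⬝ᵥ (re A *ᵥ x) = (a : ℂ) ∧ star x ⬝ᵥ (im A *ᵥ x) = (b : ℂ) := by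
  obtain ⟨r, hr0, hrx⟩ : ∃ r : ℝ, 0 < r ∧ star x ⬝ᵥ x = (r : ℂ) := by
    refine ⟨∑ i, Complex.normSq (x i), ?_, ?_⟩
    · obtain ⟨i, hi⟩ := Function.ne_iff.mp hx
      exact Finset.sum_pos' (fun j _ => Complex.normSq_nonneg _)
        ⟨i, Finset.mem_univ i, Complex.normSq_pos.mpr hi⟩
    · push_cast
      simp [dotProduct, Complex.normSq_eq_conj_mul_self]
  set s := Real.sqrt r with hsdef
  have hs0 : 0 < s := Real.sqrt_pos.mpr hr0
  have hss : s * s = r := Real.mul_self_sqrt hr0.le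
  set u : Fin n → ℂ := ((s⁻¹ : ℝ) : ℂ) • x with hu
  have hstar : (star (((s⁻¹ : ℝ) : ℂ)) : ℂ) = ((s⁻¹ : ℝ) : ℂ) := by
    rw [Complex.star_def, Complex.conj_ofReal]
  have hu1 : star u ⬝ᵥ u = 1 := by
    rw [hu, dot_smul_self, hrx, hstar]
    norm_cast
    rw [← hss]
    field_simp
  have hz : star u ⬝ᵥ (A *ᵥ u) ∈ sector α := hA ⟨u, hu1, rfl⟩
  set z := star u ⬝ᵥ (A *ᵥ u) with hzdef
  obtain ⟨hz1, hz2⟩ := hz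
  have hreu : star u ⬝ᵥ (re A *ᵥ u) = (z.re : ℂ) := by
    show star u ⬝ᵥ (((2⁻¹ : ℂ) • (A + Aᴴ)) *ᵥ u) = _
    rw [Matrix.smul_mulVec, dotProduct_smul, smul_eq_mul, Matrix.add_mulVec,
      dotProduct_add, ← hzdef, ← conj_form, ← hzdef, Complex.star_def, Complex.add_conj]
    push_cast
    ring
  have himu : star u ⬝ᵥ (im A *ᵥ u) = (z.im : ℂ) := by
    show star u ⬝ᵥ ((((2 * Complex.I)⁻¹ : ℂ) • (A - Aᴴ)) *ᵥ u) = _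
    rw [Matrix.smul_mulVec, dotProduct_smul, smul_eq_mul, Matrix.sub_mulVec,
      dotProduct_sub, ← hzdef, ← conj_form, ← hzdef, Complex.star_def, Complex.sub_conj]
    push_cast
    field_simp
  have hxu : x = ((s : ℝ) : ℂ) • u := by
    rw [hu, smul_smul]
    norm_cast
    rw [mul_inv_cancel₀ hs0.ne']
    simp
  have hstar2 : (star ((s : ℝ) : ℂ) : ℂ) = ((s : ℝ) : ℂ) := by
    rw [Complex.star_def, Complex.conj_ofReal]
  refine ⟨r * z.re, r * z.im, mul_pos hr0 hz1, ?_, ?_, ?_⟩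
  · rw [abs_mul, abs_of_pos hr0, mul_assoc]
    exact mul_le_mul_of_nonneg_left hz2 hr0.le
  · rw [hxu, quad_smul, hstar2, hreu, ← hss]
    push_cast
    ring
  · rw [hxu, quad_smul, hstar2, himu, ← hss]
    push_cast
    ring

lemma re_posDef {α : ℝ} {A : Matrix (Fin n) (Fin n) ℂ} (hA : numericalRange A ⊆ sector α) :
    (re A).PosDef := by
  refine Matrix.PosDef.of_dotProduct_mulVec_pos (re_isHermitian A) fun x hx => ?_
  obtain ⟨a, b, ha, hab, hra, _⟩ := quad_decomp hA hx
  rw [hra]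
  exact_mod_cast Complex.zero_lt_real.mpr ha

private lemma sector_smul_sub_psd {α : ℝ} {A : Matrix (Fin n) (Fin n) ℂ}
    (hA : numericalRange A ⊆ sector α) :
    (((Real.tan α : ℝ) : ℂ) • re A - im A).PosSemidef ∧
    (((Real.tan α : ℝ) : ℂ) • re A + im A).PosSemidef := by
  have hherm1 : (((Real.tan α : ℝ) : ℂ) • re A).IsHermitian := by
    show _ᴴ = _
    rw [Matrix.conjTranspose_smul, (re_isHermitian A).eq, Complex.star_def, Complex.conj_ofReal]
  constructor
  · refine Matrix.PosSemidef.of_dotProduct_mulVec_nonneg (hherm1.sub (im_isHermitian A)) fun x => ?_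
    rcases eq_or_ne x 0 with rfl | hx
    · simp
    · obtain ⟨a, b, ha, hab, hra, hsa⟩ := quad_decomp hA hx
      rw [Matrix.sub_mulVec, dotProduct_sub, Matrix.smul_mulVec, dotProduct_smul,
        smul_eq_mul, hra, hsa]
      have hr : (0 : ℝ) ≤ Real.tan α * a - b := by
        have := abs_le.mp hab
        nlinarith [this.2]
      calc (0 : ℂ) ≤ ((Real.tan α * a - b : ℝ) : ℂ) := by
            exact_mod_cast Complex.zero_le_real.mpr hr
        _ = _ := by push_cast; ring
  · refine Matrix.PosSemidef.of_dotProduct_mulVec_nonneg (hherm1.add (im_isHermitian A)) fun x => ?_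
    rcases eq_or_ne x 0 with rfl | hx
    · simp
    · obtain ⟨a, b, ha, hab, hra, hsa⟩ := quad_decomp hA hx
      rw [Matrix.add_mulVec, dotProduct_add, Matrix.smul_mulVec, dotProduct_smul,
        smul_eq_mul, hra, hsa]
      have hr : (0 : ℝ) ≤ Real.tan α * a + b := by
        have := abs_le.mp hab
        nlinarith [this.1]
      calc (0 : ℂ) ≤ ((Real.tan α * a + b : ℝ) : ℂ) := by
            exact_mod_cast Complex.zero_le_real.mpr hr
        _ = _ := by push_cast; ring

private lemma sector_isUnit_det {α : ℝ} {A : Matrix (Fin n) (Fin n) ℂ}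
    (hA : numericalRange A ⊆ sector α) : IsUnit A.det := by
  rw [isUnit_iff_ne_zero]
  intro h
  obtain ⟨v, hv, hAv⟩ := Matrix.exists_mulVec_eq_zero_iff.mpr h
  have hpd := re_posDef hA
  have h0 : star v ⬝ᵥ (re A *ᵥ v) = 0 := by
    show star v ⬝ᵥ (((2⁻¹ : ℂ) • (A + Aᴴ)) *ᵥ v) = 0
    rw [Matrix.smul_mulVec, dotProduct_smul, Matrix.add_mulVec, dotProduct_add,
      ← conj_form, hAv]
    simp
  have h1 := hpd.dotProduct_mulVec_pos hv
  rw [h0] at h1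
  exact lt_irrefl _ h1

private lemma key_psd {R S : Matrix (Fin n) (Fin n) ℂ} {t : ℝ} (ht : 0 ≤ t)
    (hR : R.PosDef) (hS : S.IsHermitian)
    (hplus : (((t : ℝ) : ℂ) • R + S).PosSemidef)
    (hminus : (((t : ℝ) : ℂ) • R - S).PosSemidef) :
    (((t ^ 2 : ℝ) : ℂ) • R - S * R⁻¹ * S).PosSemidef := by
  have hRH := hR.isHermitian
  have hdet : IsUnit R.det := isUnit_iff_ne_zero.mpr (ne_of_gt hR.det_pos)
  have hSRS_herm : (S * R⁻¹ * S).IsHermitian := by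
    have h := Matrix.isHermitian_conjTranspose_mul_mul S hR.inv.isHermitian
    rwa [hS.eq] at h
  have hherm : ((((t ^ 2 : ℝ)) : ℂ) • R - S * R⁻¹ * S).IsHermitian := by
    refine Matrix.IsHermitian.sub ?_ hSRS_herm
    show _ᴴ = _
    rw [Matrix.conjTranspose_smul, hRH.eq, Complex.star_def, Complex.conj_ofReal]
  refine Matrix.PosSemidef.of_dotProduct_mulVec_nonneg hherm fun x => ?_
  set w : Fin n → ℂ := R⁻¹ *ᵥ (S *ᵥ x) with hwdef
  have hRw : R *ᵥ w = S *ᵥ x := by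
    rw [hwdef, Matrix.mulVec_mulVec, Matrix.mul_nonsing_inv _ hdet, Matrix.one_mulVec]
  have hSRS : (S * R⁻¹ * S) *ᵥ x = S *ᵥ w := by
    conv_rhs => rw [hwdef, Matrix.mulVec_mulVec, Matrix.mulVec_mulVec]
  obtain ⟨ar, har⟩ : ∃ r : ℝ, star x ⬝ᵥ (R *ᵥ x) = (r : ℂ) := ⟨_, herm_re hRH x⟩
  obtain ⟨br, hbr⟩ : ∃ r : ℝ, star x ⬝ᵥ (S *ᵥ x) = (r : ℂ) := ⟨_, herm_re hS x⟩
  obtain ⟨qr, hqr⟩ : ∃ r : ℝ, star w ⬝ᵥ (R *ᵥ w) = (r : ℂ) := ⟨_, herm_re hRH w⟩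
  obtain ⟨cr, hcr⟩ : ∃ r : ℝ, star w ⬝ᵥ (S *ᵥ w) = (r : ℂ) := ⟨_, herm_re hS w⟩
  have hbx : star x ⬝ᵥ (R *ᵥ w) = (br : ℂ) := by rw [hRw, hbr]
  have hba : star w ⬝ᵥ (R *ᵥ x) = (br : ℂ) := by
    have h := conj_form R x w
    rw [hRH.eq] at h
    rw [← h, hbx]
    simp [Complex.star_def]
  have hqx : star w ⬝ᵥ (S *ᵥ x) = (qr : ℂ) := by rw [← hRw, hqr]
  have hxq : star x ⬝ᵥ (S *ᵥ w) = (qr : ℂ) := by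
    have h := conj_form S x w
    rw [hS.eq, hqx] at h
    calc star x ⬝ᵥ (S *ᵥ w) = star (star (star x ⬝ᵥ (S *ᵥ w))) := (star_star _).symm
      _ = star ((qr : ℂ)) := by rw [h]
      _ = (qr : ℂ) := by simp [Complex.star_def]
  have expand : ∀ (M : Matrix (Fin n) (Fin n) ℂ) (s : ℝ),
      star (x + (s : ℂ) • w) ⬝ᵥ (M *ᵥ (x + (s : ℂ) • w))
        = star x ⬝ᵥ (M *ᵥ x) + (s : ℂ) * (star x ⬝ᵥ (M *ᵥ w))
          + (s : ℂ) * (star w ⬝ᵥ (M *ᵥ x)) + (s : ℂ) ^ 2 * (star w ⬝ᵥ (M *ᵥ w)) := by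
    intro M s
    simp only [star_add, star_smul, Matrix.mulVec_add, Matrix.mulVec_smul, dotProduct_add,
      add_dotProduct, smul_dotProduct, dotProduct_smul, smul_eq_mul, Complex.star_def,
      Complex.conj_ofReal]
    ring
  have lin_sub : ∀ (p r : Fin n → ℂ), star p ⬝ᵥ ((((t : ℝ) : ℂ) • R - S) *ᵥ r)
      = ((t : ℝ) : ℂ) * (star p ⬝ᵥ (R *ᵥ r)) - star p ⬝ᵥ (S *ᵥ r) := by
    intro p r
    rw [Matrix.sub_mulVec, dotProduct_sub, Matrix.smul_mulVec, dotProduct_smul, smul_eq_mul]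
  have lin_add : ∀ (p r : Fin n → ℂ), star p ⬝ᵥ ((((t : ℝ) : ℂ) • R + S) *ᵥ r)
      = ((t : ℝ) : ℂ) * (star p ⬝ᵥ (R *ᵥ r)) + star p ⬝ᵥ (S *ᵥ r) := by
    intro p r
    rw [Matrix.add_mulVec, dotProduct_add, Matrix.smul_mulVec, dotProduct_smul, smul_eq_mul]
  have hsum : ∀ s : ℝ, 0 ≤ 2 * t * ar + 2 * t * s ^ 2 * qr - 4 * s * qr := by
    intro s
    have h1 := hminus.dotProduct_mulVec_nonneg (x + (s : ℂ) • w)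
    rw [expand _ s, lin_sub, lin_sub, lin_sub, lin_sub, har, hbr, hbx, hba, hqr, hqx, hxq,
      hcr] at h1
    have h2 := hplus.dotProduct_mulVec_nonneg (x + ((-s : ℝ) : ℂ) • w)
    rw [expand _ (-s), lin_add, lin_add, lin_add, lin_add, har, hbr, hbx, hba, hqr, hqx, hxq,
      hcr] at h2
    have h1' : (0 : ℝ) ≤ t * ar - br + s * (t * br - qr) + s * (t * br - qr)
        + s ^ 2 * (t * qr - cr) := by exact_mod_cast h1
    have h2' : (0 : ℝ) ≤ t * ar + br + (-s) * (t * br + qr) + (-s) * (t * br + qr)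
        + (-s) ^ 2 * (t * qr + cr) := by exact_mod_cast h2
    nlinarith [h1', h2']
  have lin2 : star x ⬝ᵥ (((((t ^ 2 : ℝ)) : ℂ) • R - S * R⁻¹ * S) *ᵥ x)
      = ((t ^ 2 * ar - qr : ℝ) : ℂ) := by
    rw [Matrix.sub_mulVec, dotProduct_sub, Matrix.smul_mulVec, dotProduct_smul,
      smul_eq_mul, har, hSRS, hxq]
    push_cast
    ring
  rw [lin2, Complex.zero_le_real]
  rcases eq_or_lt_of_le ht with rfl | ht'
  · have h := hsum 1
    simp only [zero_pow, mul_zero, zero_mul, one_pow, mul_one] at h ⊢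
    linarith
  · have h := hsum t⁻¹
    have h5 : 2 * t * (t⁻¹) ^ 2 * qr = 2 * t⁻¹ * qr := by
      field_simp
    rw [h5] at h
    have h6 : 0 ≤ t * (2 * t * ar + 2 * t⁻¹ * qr - 4 * t⁻¹ * qr) := mul_nonneg ht h
    have h7 : t * (2 * t * ar + 2 * t⁻¹ * qr - 4 * t⁻¹ * qr) = 2 * t ^ 2 * ar - 2 * qr := by
      field_simp
      ring
    linarith [h6, h7.symm ▸ h6]

private lemma re_inv_eq {A : Matrix (Fin n) (Fin n) ℂ} (hAd : IsUnit A.det) :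
    re A⁻¹ = A⁻¹ * re A * (A⁻¹)ᴴ := by
  have hAHd : IsUnit Aᴴ.det := by rw [Matrix.det_conjTranspose]; exact hAd.star
  show (2⁻¹ : ℂ) • (A⁻¹ + (A⁻¹)ᴴ) = A⁻¹ * ((2⁻¹ : ℂ) • (A + Aᴴ)) * (A⁻¹)ᴴ
  rw [Matrix.conjTranspose_nonsing_inv]
  have h : A⁻¹ * (A + Aᴴ) * Aᴴ⁻¹ = A⁻¹ + Aᴴ⁻¹ := by
    rw [Matrix.mul_add, Matrix.nonsing_inv_mul _ hAd, Matrix.add_mul, Matrix.one_mul,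
      Matrix.mul_assoc, Matrix.mul_nonsing_inv _ hAHd, Matrix.mul_one, add_comm]
  rw [Matrix.mul_smul, Matrix.smul_mul, h]

private lemma ARA {A : Matrix (Fin n) (Fin n) ℂ} (hRd : IsUnit (re A).det) :
    A * (re A)⁻¹ * Aᴴ = re A + im A * (re A)⁻¹ * im A := by
  set R := re A with hRdef
  set S := im A with hSdef
  have h1 : R⁻¹ * R = 1 := Matrix.nonsing_inv_mul _ hRd
  have h2 : R * R⁻¹ = 1 := Matrix.mul_nonsing_inv _ hRd
  have hA' : A = R + Complex.I • S := (re_add_I_im A).symm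
  have hAH' : Aᴴ = R - Complex.I • S := by
    conv_lhs => rw [hA']
    rw [Matrix.conjTranspose_add, Matrix.conjTranspose_smul, (re_isHermitian A).eq,
      (im_isHermitian A).eq, Complex.star_def, Complex.conj_I, neg_smul, ← sub_eq_add_neg]
  rw [hAH', hA']
  calc (R + Complex.I • S) * R⁻¹ * (R - Complex.I • S)
      = (1 + Complex.I • (S * R⁻¹)) * (R - Complex.I • S) := by
        rw [Matrix.add_mul, h2, Matrix.smul_mul]
    _ = (R - Complex.I • S) + Complex.I • (S * R⁻¹ * (R - Complex.I • S)) := by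
        rw [Matrix.add_mul, Matrix.one_mul, Matrix.smul_mul, Matrix.mul_assoc]
    _ = (R - Complex.I • S) + Complex.I • (S - Complex.I • (S * R⁻¹ * S)) := by
        rw [Matrix.mul_sub, Matrix.mul_assoc S R⁻¹ R, h1, Matrix.mul_one, Matrix.mul_smul]
    _ = R + S * R⁻¹ * S := by
        rw [smul_sub, smul_smul, Complex.I_mul_I, neg_one_smul]
        module

end AuxiliaryLemmas


/-- `(Re A)⁻¹ ≤ sec² α • Re (A⁻¹)` for a sector matrix. -/
theorem inv_re_le_sec_sq_re_inv (α : ℝ) (hα : α ∈ Set.Ico 0 (Real.pi / 2))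
    (A : Matrix (Fin n) (Fin n) ℂ) (hA : numericalRange A ⊆ sector α) :
    loewnerLE (re A)⁻¹ (((Real.cos α)⁻¹ ^ 2) • re A⁻¹) := by
  obtain ⟨hα0, hα2⟩ := hα
  have hcos : 0 < Real.cos α :=
    Real.cos_pos_of_mem_Ioo ⟨by linarith [Real.pi_pos], hα2⟩
  have ht : 0 ≤ Real.tan α := Real.tan_nonneg_of_nonneg_of_le_pi_div_two hα0 hα2.le
  have hR := re_posDef hA
  have hRd : IsUnit (re A).det := isUnit_iff_ne_zero.mpr (ne_of_gt hR.det_pos)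
  have hAd := sector_isUnit_det hA
  obtain ⟨hminus, hplus⟩ := sector_smul_sub_psd hA
  have key := key_psd ht hR (im_isHermitian A) hplus hminus
  have hsec : ((Real.cos α)⁻¹ ^ 2 : ℝ) = 1 + Real.tan α ^ 2 := by
    rw [inv_pow, ← Real.inv_one_add_tan_sq hcos.ne', inv_inv]
  show ((((Real.cos α)⁻¹ ^ 2 : ℝ)) • re A⁻¹ - (re A)⁻¹).PosSemidef
  have hsmul : (((Real.cos α)⁻¹ ^ 2 : ℝ)) • re A⁻¹
      = ((((Real.cos α)⁻¹ ^ 2 : ℝ)) : ℂ) • re A⁻¹ := by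
    ext i j
    simp [Matrix.smul_apply, Complex.real_smul]
  have hAHd : IsUnit Aᴴ.det := by rw [Matrix.det_conjTranspose]; exact hAd.star
  have h9 : A⁻¹ * (A * (re A)⁻¹ * Aᴴ) * (A⁻¹)ᴴ = (re A)⁻¹ := by
    rw [Matrix.conjTranspose_nonsing_inv]
    calc A⁻¹ * (A * (re A)⁻¹ * Aᴴ) * Aᴴ⁻¹
        = (A⁻¹ * A) * (re A)⁻¹ * (Aᴴ * Aᴴ⁻¹) := by simp only [Matrix.mul_assoc]
      _ = (re A)⁻¹ := by
          rw [Matrix.nonsing_inv_mul _ hAd, Matrix.mul_nonsing_inv _ hAHd, Matrix.one_mul,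
            Matrix.mul_one]
  have hinner : (((Real.tan α ^ 2 : ℝ)) : ℂ) • re A - im A * (re A)⁻¹ * im A
      = ((((Real.cos α)⁻¹ ^ 2 : ℝ)) : ℂ) • re A - A * (re A)⁻¹ * Aᴴ := by
    rw [ARA hRd, hsec]
    push_cast
    module
  have hfinal : ((((Real.cos α)⁻¹ ^ 2 : ℝ)) : ℂ) • re A⁻¹ - (re A)⁻¹
      = A⁻¹ * ((((Real.tan α ^ 2 : ℝ)) : ℂ) • re A - im A * (re A)⁻¹ * im A) * (A⁻¹)ᴴ := by
    rw [hinner, re_inv_eq hAd, Matrix.mul_sub, Matrix.sub_mul, Matrix.mul_smul,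
      Matrix.smul_mul, h9]
  rw [hsmul, hfinal]
  exact key.mul_mul_conjTranspose_same A⁻¹


end Paper
end
end

section
/- Let A, B be n×n positive definite complex matrices with 0 < m·I ≤ A, B ≤ M·I (0 < m ≤ M), v ∈ [0,1], h = M/m, K(h) = (h+1)²/(4h). Then det(A ∇_v B) ≤ K(h)ⁿ · det(A ♯_v B). (α = 0 case of Corollary 2.4(ii).) -/
open Matrix
open scoped ComplexOrder

noncomputable section
namespace Paper

variable {n : ℕ}

lemma kantorovich_scalar {h v t : ℝ} (h1 : 1 ≤ h) (hv0 : 0 ≤ v) (hv1 : v ≤ 1)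
    (ht1 : 1/h ≤ t) (ht2 : t ≤ h) : (1 - v) + v * t ≤ K h * t ^ v := by
  have h0 : (0:ℝ) < h := lt_of_lt_of_le one_pos h1
  have ht0 : 0 < t := lt_of_lt_of_le (by positivity) ht1
  have hP : 0 < (1 - v) * t + v := by
    rcases le_or_gt t 1 with h' | h'
    · nlinarith
    · nlinarith
  have amgm : t ^ (1 - v) * 1 ^ v ≤ (1 - v) * t + v * 1 :=
    Real.geom_mean_le_arith_mean2_weighted (by linarith) hv0 ht0.le zero_le_one (by ring)
  have key1 : t ≤ ((1 - v) * t + v) * t ^ v := by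
    have ht : t ^ (1 - v) * t ^ v = t := by
      rw [← Real.rpow_add ht0]; simp
    calc t = t ^ (1 - v) * t ^ v := ht.symm
    _ ≤ ((1 - v) * t + v) * t ^ v := by
        apply mul_le_mul_of_nonneg_right _ (Real.rpow_nonneg ht0.le v)
        simpa using amgm
  have hht : 0 ≤ h * t - 1 := by
    have : 1/h * h ≤ t * h := mul_le_mul_of_nonneg_right ht1 h0.le
    rw [one_div_mul_cancel h0.ne'] at this
    nlinarith
  have key2 : ((1 - v) + v * t) * (((1 - v) * t + v) * (4 * h)) ≤ (h + 1) ^ 2 * t := by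
    have hh1 : 0 ≤ (1 - 4 * v * (1 - v)) * (h - 1) ^ 2 * t := by
      nlinarith [mul_nonneg (mul_nonneg (sq_nonneg (1 - 2*v)) (sq_nonneg (h - 1))) ht0.le]
    have hh2 : 0 ≤ 4 * (v * (1 - v)) * ((h - t) * (h * t - 1)) := by
      have := mul_nonneg (mul_nonneg hv0 (by linarith : (0:ℝ) ≤ 1 - v))
        (mul_nonneg (by linarith : (0:ℝ) ≤ h - t) hht)
      nlinarith
    nlinarith [hh1, hh2]
  have main : ((1 - v) + v * t) * (((1 - v) * t + v) * (4 * h)) ≤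
      (K h * t ^ v) * (((1 - v) * t + v) * (4 * h)) := by
    calc ((1 - v) + v * t) * (((1 - v) * t + v) * (4 * h)) ≤ (h + 1) ^ 2 * t := key2
    _ ≤ (h + 1) ^ 2 * (((1 - v) * t + v) * t ^ v) := by nlinarith [key1, sq_nonneg (h + 1)]
    _ = (K h * t ^ v) * (((1 - v) * t + v) * (4 * h)) := by
        rw [K]; field_simp
  exact le_of_mul_le_mul_right main (by positivity)

/-- real nonneg smul of PSD is PSD -/
lemma smul_posSemidef {c : ℝ} (hc : 0 ≤ c) {X : Matrix (Fin n) (Fin n) ℂ}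
    (hX : X.PosSemidef) : (c • X).PosSemidef := by
  refine Matrix.PosSemidef.of_dotProduct_mulVec_nonneg ?_ ?_
  · have : (c • X)ᴴ = c • Xᴴ := by
      ext i j; simp [conjTranspose_apply, Complex.real_smul]
    rw [Matrix.IsHermitian, this, hX.1.eq]
  · intro x
    have h1 := hX.dotProduct_mulVec_nonneg x
    have : star x ⬝ᵥ ((c • X) *ᵥ x) = (c : ℂ) * (star x ⬝ᵥ (X *ᵥ x)) := by
      rw [smul_mulVec, dotProduct_smul, Complex.real_smul]
    rw [this]
    have : (0:ℂ) ≤ (c : ℂ) := by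
      rw [Complex.le_def]; simp [hc]
    exact mul_nonneg this h1

lemma loewner_dot {X Y : Matrix (Fin n) (Fin n) ℂ} (hXY : (Y - X).PosSemidef)
    (x : Fin n → ℂ) : (star x ⬝ᵥ (X *ᵥ x)).re ≤ (star x ⬝ᵥ (Y *ᵥ x)).re := by
  have h := hXY.dotProduct_mulVec_nonneg x
  rw [Matrix.sub_mulVec, dotProduct_sub] at h
  rw [Complex.le_def] at h
  simp only [Complex.sub_re, Complex.zero_re] at h
  linarith [h.1]


/-- determinant inequality between weighted arithmetic and geometric means. -/
theorem det_arith_le_kantorovich_pow_det_sharp (A B : Matrix (Fin n) (Fin n) ℂ) (hA : A.PosDef) (hB : B.PosDef)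
    (v : ℝ) (hv : v ∈ Set.Icc 0 1) (m M : ℝ) (hm : 0 < m) (hmM : m ≤ M)
    (hA1 : loewnerLE (m • (1 : Matrix (Fin n) (Fin n) ℂ)) A) (hA2 : loewnerLE A (M • 1))
    (hB1 : loewnerLE (m • (1 : Matrix (Fin n) (Fin n) ℂ)) B) (hB2 : loewnerLE B (M • 1)) :
    ((arith v A B).det).re ≤ K (M / m) ^ n * ((sharp v hA hB).det).re := by
  obtain ⟨hv0, hv1⟩ := hv
  have hM : 0 < M := lt_of_lt_of_le hm hmM
  set S := posSemidefSqrt hA.posSemidef with hSdef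
  have hSH : S.IsHermitian := by
    rw [hSdef, posSemidefSqrt]
    show (_ * _ * _)ᴴ = _
    rw [conjTranspose_mul, conjTranspose_mul, diagonal_conjTranspose,
      ← Matrix.star_eq_conjTranspose (star _), star_star, ← Matrix.star_eq_conjTranspose,
      ← Matrix.mul_assoc]
    congr 3
    funext i; simp
  have hSS : S * S = A := by
    rw [hSdef, posSemidefSqrt]
    have hu : star (hA.posSemidef.1.eigenvectorUnitary : Matrix (Fin n) (Fin n) ℂ) *
        (hA.posSemidef.1.eigenvectorUnitary : Matrix (Fin n) (Fin n) ℂ) = 1 :=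
      Unitary.star_mul_self_of_mem hA.posSemidef.1.eigenvectorUnitary.2
    have hD : diagonal (((↑) ∘ (√·) ∘ hA.posSemidef.1.eigenvalues) : Fin n → ℂ) *
        diagonal ((↑) ∘ (√·) ∘ hA.posSemidef.1.eigenvalues) =
        diagonal (RCLike.ofReal ∘ hA.posSemidef.1.eigenvalues) := by
      rw [diagonal_mul_diagonal]; congr 1; funext i
      simp only [Function.comp]
      rw [← Complex.ofReal_mul, Real.mul_self_sqrt (hA.posSemidef.eigenvalues_nonneg i)]; rfl
    conv_rhs => rw [hA.posSemidef.1.spectral_theorem, Unitary.conjStarAlgAut_apply]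
    simp only [Matrix.mul_assoc]
    rw [← Matrix.mul_assoc (star _) _ , hu, Matrix.one_mul, ← Matrix.mul_assoc (diagonal _) (diagonal _), hD]
  have hAdet : A.det ≠ 0 := hA.det_pos.ne'
  have hSdet : IsUnit S.det := by
    rw [isUnit_iff_ne_zero]
    intro h
    exact hAdet (by rw [← hSS, det_mul, h, mul_zero])
  have hSinv : S * S⁻¹ = 1 := mul_nonsing_inv S hSdet
  have hSinv' : S⁻¹ * S = 1 := nonsing_inv_mul S hSdet
  have hSinvH : (S⁻¹)ᴴ = S⁻¹ := by rw [conjTranspose_nonsing_inv, hSH.eq]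
  set C := S⁻¹ * B * (S⁻¹)ᴴ with hCdef
  have hC : C.IsHermitian := isHermitian_mul_mul_conjTranspose S⁻¹ hB.1
  have hW : S⁻¹ * (S⁻¹)ᴴ = A⁻¹ := by rw [hSinvH, ← hSS, Matrix.mul_inv_rev]
  -- congruence identities
  have conj_smul_one : ∀ c : ℝ, S⁻¹ * (c • (1 : Matrix (Fin n) (Fin n) ℂ)) * (S⁻¹)ᴴ = c • A⁻¹ := by
    intro c
    rw [Matrix.mul_smul, Matrix.mul_one, Matrix.smul_mul, hW]
  have conj_A : S⁻¹ * A * (S⁻¹)ᴴ = 1 := by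
    rw [hSinvH, ← hSS, ← Matrix.mul_assoc, hSinv', Matrix.one_mul, hSinv]
  have psd1 : (C - m • A⁻¹).PosSemidef := by
    have h1 : (B - m • 1).PosSemidef := hB1
    have := h1.mul_mul_conjTranspose_same S⁻¹
    rwa [Matrix.mul_sub, Matrix.sub_mul, conj_smul_one] at this
  have psd2 : (M • A⁻¹ - C).PosSemidef := by
    have h1 : (M • 1 - B).PosSemidef := hB2
    have := h1.mul_mul_conjTranspose_same S⁻¹
    rwa [Matrix.mul_sub, Matrix.sub_mul, conj_smul_one] at this
  have psd3 : (A⁻¹ - M⁻¹ • 1).PosSemidef := by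
    have h1 : (M • 1 - A).PosSemidef := hA2
    have h2 := (h1.mul_mul_conjTranspose_same S⁻¹)
    rw [Matrix.mul_sub, Matrix.sub_mul, conj_smul_one, conj_A] at h2
    have h3 := smul_posSemidef (c := M⁻¹) (by positivity) h2
    rwa [smul_sub, smul_smul, inv_mul_cancel₀ hM.ne', one_smul] at h3
  have psd4 : (m⁻¹ • 1 - A⁻¹).PosSemidef := by
    have h1 : (A - m • 1).PosSemidef := hA1
    have h2 := (h1.mul_mul_conjTranspose_same S⁻¹)
    rw [Matrix.mul_sub, Matrix.sub_mul, conj_smul_one, conj_A] at h2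
    have h3 := smul_posSemidef (c := m⁻¹) (by positivity) h2
    rwa [smul_sub, smul_smul, inv_mul_cancel₀ hm.ne', one_smul] at h3
  -- eigenvalue bounds
  set μ := hC.eigenvalues with hμdef
  have hbound : ∀ i, m / M ≤ μ i ∧ μ i ≤ M / m := by
    intro i
    set x : Fin n → ℂ := ⇑(hC.eigenvectorBasis i) with hxdef
    have hx1 : star x ⬝ᵥ x = 1 := by
      have h2 : (inner ℂ (hC.eigenvectorBasis i) (hC.eigenvectorBasis i) : ℂ) = 1 := by
        rw [orthonormal_iff_ite.mp hC.eigenvectorBasis.orthonormal i i]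
        simp
      rw [← h2, EuclideanSpace.inner_eq_star_dotProduct, dotProduct_comm]
    have dot_smul_one : ∀ c : ℝ, ((star x) ⬝ᵥ (((c • (1 : Matrix (Fin n) (Fin n) ℂ))) *ᵥ x)).re = c := by
      intro c
      rw [smul_mulVec, one_mulVec, dotProduct_smul, hx1]
      simp [Complex.real_smul]
    have dot_smul_W : ∀ c : ℝ, ((star x) ⬝ᵥ (((c • A⁻¹)) *ᵥ x)).re
        = c * ((star x) ⬝ᵥ (A⁻¹ *ᵥ x)).re := by
      intro c
      rw [smul_mulVec, dotProduct_smul, Complex.real_smul]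
      simp
    have hmu : μ i = ((star x) ⬝ᵥ (C *ᵥ x)).re := by
      have := hC.eigenvalues_eq i
      simpa using this
    set r := ((star x) ⬝ᵥ (A⁻¹ *ᵥ x)).re with hrdef
    have hr1 : M⁻¹ ≤ r := by
      have := loewner_dot psd3 x
      rwa [dot_smul_one] at this
    have hr2 : r ≤ m⁻¹ := by
      have := loewner_dot psd4 x
      rwa [dot_smul_one] at this
    have hmu1 : m * r ≤ μ i := by
      have := loewner_dot psd1 x
      rwa [dot_smul_W, ← hmu] at this
    have hmu2 : μ i ≤ M * r := by
      have := loewner_dot psd2 x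
      rwa [dot_smul_W, ← hmu] at this
    constructor
    · calc m / M = m * M⁻¹ := div_eq_mul_inv m M
      _ ≤ m * r := by nlinarith
      _ ≤ μ i := hmu1
    · calc μ i ≤ M * r := hmu2
      _ ≤ M * m⁻¹ := by nlinarith
      _ = M / m := (div_eq_mul_inv M m).symm
  -- determinant computations
  set U := (Matrix.IsHermitian.eigenvectorUnitary hC : Matrix (Fin n) (Fin n) ℂ) with hUdef
  have hU1 : U * star U = 1 :=
    (Matrix.mem_unitaryGroup_iff).mp (Matrix.IsHermitian.eigenvectorUnitary hC).2
  have hUdet : U.det * (star U).det = 1 := by rw [← det_mul, hU1, det_one]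
  have det_conj : ∀ D : Matrix (Fin n) (Fin n) ℂ, (U * D * star U).det = D.det := by
    intro D
    rw [det_mul, det_mul]
    linear_combination D.det * hUdet
  have hSSdet : S.det * S.det = A.det := by rw [← det_mul, hSS]
  have sharp_det : (sharp v hA hB).det = A.det * ∏ i, ((μ i ^ v : ℝ) : ℂ) := by
    have e : sharp v hA hB = S * hC.cfc (fun x => Real.rpow x v) * S := rfl
    rw [e, Matrix.IsHermitian.cfc, Unitary.conjStarAlgAut_apply, ← hUdef]
    rw [det_mul, det_mul, det_conj, det_diagonal]
    have : ∏ i, (RCLike.ofReal ∘ (fun x => Real.rpow x v) ∘ μ) i = ∏ i, ((μ i ^ v : ℝ) : ℂ) := by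
      rfl
    rw [this]
    linear_combination (∏ i, ((μ i ^ v : ℝ) : ℂ)) * hSSdet
  have SCS : S * C * S = B := by
    show S * (S⁻¹ * B * S⁻¹ᴴ) * S = B
    rw [hSinvH]
    simp only [← Matrix.mul_assoc]
    rw [hSinv, Matrix.one_mul, Matrix.mul_assoc, hSinv', Matrix.mul_one]
  have e_arith : arith v A B = S * ((1 - v) • 1 + v • C) * S := by
    have e2 : S * ((1 - v) • 1 + v • C) * S = (1 - v) • A + v • B := by
      simp only [Matrix.mul_add, Matrix.add_mul, Matrix.mul_smul, Matrix.smul_mul,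
        Matrix.mul_one]
      rw [hSS, SCS]
    rw [arith, ← e2]
  have hone : (1 : Matrix (Fin n) (Fin n) ℂ) = U * 1 * star U := by
    rw [Matrix.mul_one, hU1]
  have e_inner : (1 - v) • (1 : Matrix (Fin n) (Fin n) ℂ) + v • C =
      U * diagonal (fun j => (((1 - v) + v * μ j : ℝ) : ℂ)) * star U := by
    calc (1 - v) • (1 : Matrix (Fin n) (Fin n) ℂ) + v • C
        = (1 - v) • (U * 1 * star U) + v • (U * diagonal (RCLike.ofReal ∘ μ) * star U) := by
          have hspec := hC.spectral_theorem
          rw [Unitary.conjStarAlgAut_apply] at hspec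
          rw [← hone, ← hspec]
      _ = U * ((1 - v) • 1 + v • diagonal (RCLike.ofReal ∘ μ)) * star U := by
          simp only [Matrix.mul_add, Matrix.add_mul, Matrix.mul_smul, Matrix.smul_mul]
      _ = U * diagonal (fun j => (((1 - v) + v * μ j : ℝ) : ℂ)) * star U := by
          have hmid : ((1 - v) • (1 : Matrix (Fin n) (Fin n) ℂ)
              + v • diagonal (RCLike.ofReal ∘ μ)) =
              diagonal (fun j => (((1 - v) + v * μ j : ℝ) : ℂ)) := by
            rw [← Matrix.diagonal_one, ← Matrix.diagonal_smul, ← Matrix.diagonal_smul,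
              Matrix.diagonal_add]
            rw [Matrix.diagonal_eq_diagonal_iff]
            intro j
            show ((1 - v) • (1:ℂ)) + v • (RCLike.ofReal (μ j)) = _
            simp only [Complex.real_smul]
            push_cast
            ring_nf
            rfl
          rw [hmid]
  have arith_det : (arith v A B).det = A.det * ∏ i, (((1 - v) + v * μ i : ℝ) : ℂ) := by
    rw [e_arith, e_inner, det_mul, det_mul, det_conj, det_diagonal]
    linear_combination (∏ i, (((1 - v) + v * μ i : ℝ) : ℂ)) * hSSdet
  -- positivity of det A
  have hdet := hA.det_pos
  rw [Complex.lt_def] at hdet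
  obtain ⟨hdre, hdim⟩ := hdet
  simp only [Complex.zero_re, Complex.zero_im] at hdre hdim
  have hA_eq : A.det = ((A.det.re : ℝ) : ℂ) := by
    apply Complex.ext
    · simp
    · simp [← hdim]
  -- final assembly
  rw [arith_det, sharp_det, hA_eq]
  rw [← Complex.ofReal_prod, ← Complex.ofReal_prod, ← Complex.ofReal_mul, ← Complex.ofReal_mul,
    Complex.ofReal_re, Complex.ofReal_re]
  have h1 : 1 ≤ M / m := (one_le_div hm).mpr hmM
  have hK0 : 0 ≤ K (M / m) := by
    rw [K]
    apply div_nonneg (sq_nonneg _)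
    positivity
  have hμpos : ∀ i, 0 < μ i := fun i => lt_of_lt_of_le (by positivity) (hbound i).1
  have prodle : (∏ i, ((1 - v) + v * μ i)) ≤ ∏ i, (K (M / m) * μ i ^ v) := by
    apply Finset.prod_le_prod
    · intro i _
      have := hμpos i
      nlinarith [mul_nonneg hv0 (hμpos i).le]
    · intro i _
      exact kantorovich_scalar h1 hv0 hv1 (by rw [one_div_div]; exact (hbound i).1) (hbound i).2
  have prodK : (∏ i : Fin n, (K (M / m) * μ i ^ v)) = K (M / m) ^ n * ∏ i, μ i ^ v := by
    rw [Finset.prod_mul_distrib, Finset.prod_const, Finset.card_univ, Fintype.card_fin]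
  calc A.det.re * ∏ i, ((1 - v) + v * μ i)
      ≤ A.det.re * (K (M / m) ^ n * ∏ i, μ i ^ v) := by
        apply mul_le_mul_of_nonneg_left (prodle.trans_eq prodK) hdre.le
    _ = K (M / m) ^ n * (A.det.re * ∏ i, μ i ^ v) := by ring



end Paper
end
end

section
/- For n×n positive definite complex matrices A and B, det(A + B) ≤ det(I + A) · det(I + B). -/
open Matrix
open scoped ComplexOrder

noncomputable section
namespace Paper

variable {n : ℕ}

lemma posSemidefSqrt_mul_self {A : Matrix (Fin n) (Fin n) ℂ} (hA : A.PosSemidef) :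
    posSemidefSqrt hA * posSemidefSqrt hA = A := by
  unfold posSemidefSqrt
  set U := (hA.1.eigenvectorUnitary : Matrix (Fin n) (Fin n) ℂ) with hUdef
  have hU : star U * U = 1 := (Matrix.mem_unitaryGroup_iff').mp hA.1.eigenvectorUnitary.2
  have hD : diagonal (((↑) : ℝ → ℂ) ∘ (√·) ∘ hA.1.eigenvalues) *
      diagonal (((↑) : ℝ → ℂ) ∘ (√·) ∘ hA.1.eigenvalues)
      = diagonal (RCLike.ofReal ∘ hA.1.eigenvalues) := by
    rw [diagonal_mul_diagonal]
    congr 1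
    funext i
    simp only [Function.comp_apply]
    rw [← Complex.ofReal_mul, Real.mul_self_sqrt (hA.eigenvalues_nonneg i)]
    rfl
  have hspec : A = U * diagonal (RCLike.ofReal ∘ hA.1.eigenvalues) * star U := hA.1.spectral_theorem
  conv_rhs => rw [hspec]
  simp only [mul_assoc]
  rw [← mul_assoc (star U) U, hU, one_mul, ← mul_assoc _ _ (star U), hD]

lemma posSemidefSqrt_isHermitian {A : Matrix (Fin n) (Fin n) ℂ} (hA : A.PosSemidef) :
    (posSemidefSqrt hA).IsHermitian := by
  unfold posSemidefSqrt
  have hDh : (diagonal (((↑) : ℝ → ℂ) ∘ (√·) ∘ hA.1.eigenvalues)).IsHermitian := by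
    simp [IsHermitian, diagonal_conjTranspose]
  exact isHermitian_mul_mul_conjTranspose _ hDh

private lemma one_le_det_one_add {R : Matrix (Fin n) (Fin n) ℂ} (hR : R.PosSemidef) :
    1 ≤ (1 + R).det := by
  have hH := hR.1
  set U := (hH.eigenvectorUnitary : Matrix (Fin n) (Fin n) ℂ) with hUdef
  have hU : U * star U = 1 := (Matrix.mem_unitaryGroup_iff).mp hH.eigenvectorUnitary.2
  have hspec : R = U * diagonal (RCLike.ofReal ∘ hH.eigenvalues) * star U := hH.spectral_theorem
  have key : 1 + R = U * ((1 : Matrix (Fin n) (Fin n) ℂ) + diagonal (RCLike.ofReal ∘ hH.eigenvalues)) * star U := by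
    rw [mul_add, add_mul, mul_one, hU, ← hspec]
  have hdetU : U.det * (star U).det = 1 := by rw [← det_mul, hU, det_one]
  have hdet : (1 + R).det = ((1 : Matrix (Fin n) (Fin n) ℂ) + diagonal (RCLike.ofReal ∘ hH.eigenvalues)).det := by
    rw [key, det_mul, det_mul, mul_comm, ← mul_assoc, mul_comm (star U).det, hdetU, one_mul]
  rw [hdet]
  have : (1 : Matrix (Fin n) (Fin n) ℂ) + diagonal (RCLike.ofReal ∘ hH.eigenvalues)
      = diagonal (fun i => 1 + (hH.eigenvalues i : ℂ)) := by
    rw [← diagonal_one, diagonal_add]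
    rfl
  rw [this, det_diagonal]
  have : (∏ i, (1 + (hH.eigenvalues i : ℂ))) = ((∏ i, (1 + hH.eigenvalues i) : ℝ) : ℂ) := by
    push_cast; ring
  rw [this, show (1 : ℂ) = ((1 : ℝ) : ℂ) by norm_num, Complex.real_le_real]
  calc (1 : ℝ) = ∏ _i : Fin n, (1 : ℝ) := by simp
    _ ≤ ∏ i, (1 + hH.eigenvalues i) :=
        Finset.prod_le_prod (fun i _ => by norm_num)
          (fun i _ => by linarith [hR.eigenvalues_nonneg i])

private lemma det_add_eq' {X : Matrix (Fin n) (Fin n) ℂ} (hX : X.PosDef)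
    (D : Matrix (Fin n) (Fin n) ℂ) :
    (X + D).det = X.det *
      (1 + (posSemidefSqrt hX.posSemidef)⁻¹ * D * (posSemidefSqrt hX.posSemidef)⁻¹).det := by
  set S := posSemidefSqrt hX.posSemidef with hSdef
  have hSS : S * S = X := posSemidefSqrt_mul_self hX.posSemidef
  have hdX : X.det ≠ 0 := hX.det_pos.ne'
  have hdS : IsUnit S.det := by
    refine isUnit_iff_ne_zero.mpr fun h => hdX ?_
    rw [← hSS, det_mul, h, zero_mul]
  have hSinv : S * S⁻¹ = 1 := mul_nonsing_inv _ hdS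
  have hSinv' : S⁻¹ * S = 1 := nonsing_inv_mul _ hdS
  have key : X + D = S * (1 + S⁻¹ * D * S⁻¹) * S := by
    rw [mul_add, mul_one, add_mul, hSS]
    congr 1
    symm
    calc S * (S⁻¹ * D * S⁻¹) * S = (S * S⁻¹) * D * (S⁻¹ * S) := by
          simp only [mul_assoc]
      _ = D := by rw [hSinv, hSinv', one_mul, mul_one]
  rw [key, det_mul, det_mul, ← hSS, det_mul]
  ring

private lemma psd_inv_conj {S D : Matrix (Fin n) (Fin n) ℂ} (hS : S.IsHermitian)
    (hD : D.PosSemidef) : (S⁻¹ * D * S⁻¹).PosSemidef := by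
  have := hD.mul_mul_conjTranspose_same S⁻¹
  rwa [hS.inv.eq] at this

private lemma det_add_psd {X D : Matrix (Fin n) (Fin n) ℂ} (hX : X.PosDef)
    (hD : D.PosSemidef) : X.det ≤ (X + D).det := by
  rw [det_add_eq' hX D]
  have hR : ((posSemidefSqrt hX.posSemidef)⁻¹ * D * (posSemidefSqrt hX.posSemidef)⁻¹).PosSemidef :=
    psd_inv_conj (posSemidefSqrt_isHermitian hX.posSemidef) hD
  calc X.det = X.det * 1 := (mul_one _).symm
    _ ≤ _ := mul_le_mul_of_nonneg_left (one_le_det_one_add hR) hX.det_pos.le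

private lemma one_sub_inv_psd {M : Matrix (Fin n) (Fin n) ℂ} (hM : M.PosDef)
    (h1 : (M - 1).PosSemidef) : (1 - M⁻¹).PosSemidef := by
  have hMinv : M⁻¹.PosDef := hM.inv
  set V := posSemidefSqrt hMinv.posSemidef with hVdef
  have hVh : V.IsHermitian := posSemidefSqrt_isHermitian hMinv.posSemidef
  have hVV : V * V = M⁻¹ := posSemidefSqrt_mul_self hMinv.posSemidef
  have hMM : M * M⁻¹ = 1 := mul_nonsing_inv _ hM.det_pos.ne'.isUnit
  have hVMV : V * M * V = 1 := by
    have h1' : (M * V) * V = 1 := by rw [mul_assoc, hVV, hMM]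
    have h2 : V * (M * V) = 1 := mul_eq_one_comm.mp h1'
    rw [mul_assoc]
    exact h2
  have key : V * (M - 1) * V = 1 - M⁻¹ := by
    rw [mul_sub, mul_one, sub_mul, hVMV, hVV]
  have := h1.mul_mul_conjTranspose_same V
  rwa [hVh.eq, key] at this

private lemma det_one_add_mul_comm' {P Q : Matrix (Fin n) (Fin n) ℂ} (hP : IsUnit P.det) :
    (1 + P * Q).det = (1 + Q * P).det := by
  have hPu : IsUnit P := (isUnit_iff_isUnit_det _).mpr hP
  have : 1 + P * Q = P * (1 + Q * P) * P⁻¹ := by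
    rw [mul_add, mul_one, add_mul, mul_nonsing_inv _ hP]
    congr 1
    symm
    calc P * (Q * P) * P⁻¹ = P * Q * (P * P⁻¹) := by simp only [mul_assoc]
      _ = P * Q := by rw [mul_nonsing_inv _ hP, mul_one]
  rw [this, det_conj hPu]

/-- `det (A + B) ≤ det (I + A) det (I + B)`. -/
theorem det_add_le_det_one_add_mul_det_one_add (A B : Matrix (Fin n) (Fin n) ℂ)
    (hA : A.PosDef) (hB : B.PosDef) :
    ((A + B).det).re ≤ ((1 + A).det).re * ((1 + B).det).re := by
  have h1A : (1 + A).PosDef := Matrix.PosDef.one.add_posSemidef hA.posSemidef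
  have h1B : (1 + B).PosDef := Matrix.PosDef.one.add_posSemidef hB.posSemidef
  have hAB : (A + B).PosDef := hA.add hB
  have step1 : (A + B).det ≤ (1 + A + B).det := by
    have := det_add_psd hAB Matrix.PosSemidef.one
    rwa [add_comm (A + B) 1, ← add_assoc] at this
  set S := posSemidefSqrt h1A.posSemidef with hSdef
  have split : (1 + A + B).det = (1 + A).det * (1 + S⁻¹ * B * S⁻¹).det := det_add_eq' h1A B
  set T := posSemidefSqrt hB.posSemidef with hTdef
  have hTh : T.IsHermitian := posSemidefSqrt_isHermitian hB.posSemidef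
  have hTT : T * T = B := posSemidefSqrt_mul_self hB.posSemidef
  have hSS : S * S = 1 + A := posSemidefSqrt_mul_self h1A.posSemidef
  have hdS : IsUnit S.det := by
    refine isUnit_iff_ne_zero.mpr fun h => h1A.det_pos.ne' ?_
    rw [← hSS, det_mul, h, zero_mul]
  have hdT : IsUnit T.det := by
    refine isUnit_iff_ne_zero.mpr fun h => hB.det_pos.ne' ?_
    rw [← hTT, det_mul, h, zero_mul]
  set W := (1 + A)⁻¹ with hWdef
  have hWpos : W.PosDef := h1A.inv
  have hfac : S⁻¹ * B * S⁻¹ = (S⁻¹ * T) * (T * S⁻¹) := by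
    rw [← hTT]; simp only [mul_assoc]
  have hQP : (T * S⁻¹) * (S⁻¹ * T) = T * W * T := by
    rw [hWdef, ← hSS, Matrix.mul_inv_rev]
    simp only [mul_assoc]
  have hPdet : IsUnit ((S⁻¹ * T).det) := by
    rw [det_mul, det_nonsing_inv, Ring.inverse_eq_inv']
    exact (isUnit_iff_ne_zero.mpr (inv_ne_zero (isUnit_iff_ne_zero.mp hdS))).mul hdT
  have sylv : (1 + S⁻¹ * B * S⁻¹).det = (1 + T * W * T).det := by
    rw [hfac, det_one_add_mul_comm' hPdet, hQP]
  have hTWT : (T * W * T).PosSemidef := by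
    have := hWpos.posSemidef.mul_mul_conjTranspose_same T
    rwa [hTh.eq] at this
  have h1TWT : (1 + T * W * T).PosDef := Matrix.PosDef.one.add_posSemidef hTWT
  have hsub : (1 - W).PosSemidef := by
    apply one_sub_inv_psd h1A
    simpa using hA.posSemidef
  have hD : (T * (1 - W) * T).PosSemidef := by
    have := hsub.mul_mul_conjTranspose_same T
    rwa [hTh.eq] at this
  have hid : (1 + T * W * T) + T * (1 - W) * T = 1 + B := by
    rw [mul_sub, mul_one, sub_mul, hTT]
    abel
  have mono : (1 + T * W * T).det ≤ (1 + B).det := by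
    have := det_add_psd h1TWT hD
    rwa [hid] at this
  have main : (A + B).det ≤ (1 + A).det * (1 + B).det :=
    calc (A + B).det ≤ (1 + A + B).det := step1
      _ = (1 + A).det * (1 + T * W * T).det := by rw [split, sylv]
      _ ≤ (1 + A).det * (1 + B).det := mul_le_mul_of_nonneg_left mono h1A.det_pos.le
  have himA : ((1 + A).det).im = 0 := by
    have := (Complex.lt_def.mp h1A.det_pos).2
    simpa using this.symm
  have himB : ((1 + B).det).im = 0 := by
    have := (Complex.lt_def.mp h1B.det_pos).2
    simpa using this.symm
  calc ((A + B).det).re ≤ ((1 + A).det * (1 + B).det).re := (Complex.le_def.mp main).1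
    _ = ((1 + A).det).re * ((1 + B).det).re := by rw [Complex.mul_re, himA, himB]; ring


end Paper
end
end
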